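/- Let K be a field, Q a positive integer, and f₁,...,f_n ∈ K[x₁,...,x_n] with deg fᵢ < Q for all i. Let P ∈ K[x₁,...,x_n] be a nonzero polynomial with deg P < Q. Then P does not belong to the ideal generated by f₁ - x₁^Q, ..., f_n - x_n^Q. Equivalently, if P = Σᵢ uᵢ·(fᵢ - xᵢ^Q) for some polynomials uᵢ, then P = 0. -/

import Mathlib

open MvPolynomial

variable {σ : Type*} {K : Type*} [CommRing K]

local infixl:70 " /ᵐ " => MvPolynomial.divMonomial

lemma fs_le_add {i a : σ} (h : i ≠ a) (Q : ℕ) (m : σ →₀ ℕ) :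
    Finsupp.single i Q ≤ Finsupp.single a Q + m ↔ Finsupp.single i Q ≤ m := by
  classical
  rw [Finsupp.single_le_iff, Finsupp.single_le_iff]
  simp [Finsupp.single_apply, Ne.symm h]

lemma fs_sub_add {i a : σ} (h : i ≠ a) {Q : ℕ} {m : σ →₀ ℕ}
    (hle : Finsupp.single i Q ≤ m) :
    Finsupp.single a Q + m - Finsupp.single i Q
      = Finsupp.single a Q + (m - Finsupp.single i Q) := by
  classical
  ext k
  have hQ : Q ≤ m i := by simpa using Finsupp.single_le_iff.mp hle
  simp only [Finsupp.coe_add, Finsupp.coe_tsub, Pi.add_apply, Pi.sub_apply,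
    Finsupp.single_apply]
  by_cases hk : i = k
  · subst hk; simp [h]; omega
  · simp [hk]

-- δ commutes with multiplication by X i ^ Q, i ≠ a
lemma divMonomial_mul_X_pow {i a : σ} (h : i ≠ a) (Q : ℕ) (p : MvPolynomial σ K) :
    (p * X i ^ Q) /ᵐ Finsupp.single a Q = (p /ᵐ Finsupp.single a Q) * X i ^ Q := by
  ext m
  rw [coeff_divMonomial, X_pow_eq_monomial, coeff_mul_monomial', coeff_mul_monomial']
  by_cases hle : Finsupp.single i Q ≤ m
  · rw [if_pos hle, if_pos ((fs_le_add h Q m).mpr hle), coeff_divMonomial, fs_sub_add h hle]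
  · rw [if_neg hle, if_neg (fun c => hle ((fs_le_add h Q m).mp c))]

lemma divMonomial_self_mul (a : σ) (Q : ℕ) (p : MvPolynomial σ K) :
    (p * X a ^ Q) /ᵐ Finsupp.single a Q = p := by
  rw [X_pow_eq_monomial]
  exact divMonomial_mul_monomial _ _

lemma sum_divMonomial {ι : Type*} (s : Finset ι) (g : ι → MvPolynomial σ K) (a : σ →₀ ℕ) :
    (∑ i ∈ s, g i) /ᵐ a = ∑ i ∈ s, (g i) /ᵐ a := by
  classical
  induction s using Finset.induction_on with
  | empty => simp [MvPolynomial.zero_divMonomial]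
  | insert _ _ h ih => rw [Finset.sum_insert h, Finset.sum_insert h, MvPolynomial.add_divMonomial, ih]

/-- Koszul-type syzygies of the pure powers `X i ^ Q`. -/
lemma syzygy [DecidableEq σ] (Q : ℕ) (s : Finset σ) :
    ∀ v : σ → MvPolynomial σ K, (∑ i ∈ s, v i * X i ^ Q) = 0 →
    ∃ w : σ → σ → MvPolynomial σ K,
      (∀ i j, w j i = - w i j) ∧ (∀ i, w i i = 0) ∧
      (∀ i ∈ s, v i = ∑ j ∈ s, w i j * X j ^ Q) := by
  induction s using Finset.induction_on with
  | empty => intro v _; exact ⟨0, by simp, by simp, by simp⟩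
  | @insert a s ha ih =>
    intro v hv
    set ea := Finsupp.single a Q with hea
    -- apply δ = · /ᵐ ea to the relation
    have hδ : v a + ∑ i ∈ s, (v i /ᵐ ea) * X i ^ Q = 0 := by
      have := congrArg (· /ᵐ ea) hv
      simp only [MvPolynomial.zero_divMonomial] at this
      rw [Finset.sum_insert ha, MvPolynomial.add_divMonomial, sum_divMonomial,
        divMonomial_self_mul] at this
      rw [← this]
      congr 1
      refine Finset.sum_congr rfl fun i hi => ?_
      exact (divMonomial_mul_X_pow (ne_of_mem_of_not_mem hi ha) Q (v i)).symm
    -- the modified coefficients satisfy the relation over s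
    have hrel : (∑ i ∈ s, (v i - (v i /ᵐ ea) * X a ^ Q) * X i ^ Q) = 0 := by
      have h2 : ∑ i ∈ s, (v i /ᵐ ea) * X a ^ Q * X i ^ Q
          = (∑ i ∈ s, (v i /ᵐ ea) * X i ^ Q) * X a ^ Q := by
        rw [Finset.sum_mul]; refine Finset.sum_congr rfl fun i _ => by ring
      have h3 : (∑ i ∈ s, (v i /ᵐ ea) * X i ^ Q) = - v a := by
        linear_combination hδ
      simp only [sub_mul, Finset.sum_sub_distrib, h2, h3]
      have h4 : v a * X a ^ Q + ∑ i ∈ s, v i * X i ^ Q = 0 := by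
        have := hv; rwa [Finset.sum_insert ha] at this
      linear_combination h4
    obtain ⟨w', hw'anti, hw'diag, hw'⟩ := ih _ hrel
    classical
    refine ⟨fun i j => if i = a then (if j = a then 0 else -(v j /ᵐ ea))
      else (if j = a then v i /ᵐ ea else w' i j), ?_, ?_, ?_⟩
    · intro i j
      by_cases hi : i = a <;> by_cases hj : j = a <;> simp [hi, hj, hw'anti i j]
    · intro i
      by_cases hi : i = a <;> simp [hi, hw'diag i]
    · intro i hi
      rcases Finset.mem_insert.mp hi with rfl | hi
      · rw [Finset.sum_insert ha]
        have e1 : (if i = i then (if i = i then (0:MvPolynomial σ K) else -(v i /ᵐ ea))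
            else (if i = i then v i /ᵐ ea else w' i i)) = 0 := by simp
        have e2 : ∑ j ∈ s, (if i = i then (if j = i then (0:MvPolynomial σ K) else -(v j /ᵐ ea))
            else (if j = i then v i /ᵐ ea else w' i j)) * X j ^ Q
            = -∑ j ∈ s, (v j /ᵐ ea) * X j ^ Q := by
          rw [← Finset.sum_neg_distrib]
          refine Finset.sum_congr rfl fun j hj => ?_
          rw [if_pos rfl, if_neg (ne_of_mem_of_not_mem hj ha)]; ring
        beta_reduce
        rw [e1, e2]
        linear_combination hδ
      · have hia : i ≠ a := ne_of_mem_of_not_mem hi ha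
        rw [Finset.sum_insert ha]
        have e1 : (if i = a then (if a = a then (0:MvPolynomial σ K) else -(v a /ᵐ ea))
            else (if a = a then v i /ᵐ ea else w' i a)) = v i /ᵐ ea := by
          rw [if_neg hia, if_pos rfl]
        have e2 : ∑ j ∈ s, (if i = a then (if j = a then (0:MvPolynomial σ K) else -(v j /ᵐ ea))
            else (if j = a then v i /ᵐ ea else w' i j)) * X j ^ Q
            = ∑ j ∈ s, w' i j * X j ^ Q := by
          refine Finset.sum_congr rfl fun j hj => ?_
          rw [if_neg hia, if_neg (ne_of_mem_of_not_mem hj ha)]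
        beta_reduce
        rw [e1, e2, ← hw' i hi]
        ring

lemma fs_degree_single (j : σ) (Q : ℕ) : Finsupp.degree (Finsupp.single j Q) = Q := by
  classical
  rcases eq_or_ne Q 0 with rfl | hQ
  · simp
  · rw [Finsupp.degree_apply, Finsupp.support_single_ne_zero _ hQ, Finset.sum_singleton,
      Finsupp.single_eq_same]

lemma fs_degree_add (x y : σ →₀ ℕ) :
    Finsupp.degree (x + y) = Finsupp.degree x + Finsupp.degree y := by
  rw [Finsupp.degree_eq_weight_one, map_add]

lemma fs_degree_sub {j : σ} {Q : ℕ} {d : σ →₀ ℕ} (h : Finsupp.single j Q ≤ d) :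
    Finsupp.degree (d - Finsupp.single j Q) = Finsupp.degree d - Q := by
  have := fs_degree_add (d - Finsupp.single j Q) (Finsupp.single j Q)
  rw [tsub_add_cancel_of_le h, fs_degree_single] at this
  omega

lemma fs_degree_ge {j : σ} {Q : ℕ} {d : σ →₀ ℕ} (h : Finsupp.single j Q ≤ d) :
    Q ≤ Finsupp.degree d := by
  have := fs_degree_add (d - Finsupp.single j Q) (Finsupp.single j Q)
  rw [tsub_add_cancel_of_le h, fs_degree_single] at this
  omega

/-- shift of homogeneous components under multiplication by `X j ^ Q` -/
lemma homogeneousComponent_mul_X_pow (m Q : ℕ) (j : σ) (p : MvPolynomial σ K) :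
    homogeneousComponent (m + Q) (p * X j ^ Q)
      = homogeneousComponent m p * X j ^ Q := by
  ext d
  rw [coeff_homogeneousComponent, X_pow_eq_monomial, coeff_mul_monomial',
    coeff_mul_monomial']
  by_cases hle : Finsupp.single j Q ≤ d
  · rw [if_pos hle, if_pos hle, coeff_homogeneousComponent]
    have h1 : Finsupp.degree (d - Finsupp.single j Q) = Finsupp.degree d - Q := fs_degree_sub hle
    have h2 : Q ≤ Finsupp.degree d := fs_degree_ge hle
    by_cases hd : Finsupp.degree d = m + Q
    · rw [if_pos hd, if_pos (by omega)]
    · rw [if_neg hd, if_neg (by omega)]; ring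
  · rw [if_neg hle, if_neg hle, ite_self]

lemma homogeneousComponent_mul_X_pow_of_lt {m Q : ℕ} (h : m < Q) (j : σ)
    (p : MvPolynomial σ K) :
    homogeneousComponent m (p * X j ^ Q) = 0 := by
  ext d
  rw [coeff_homogeneousComponent]
  by_cases hd : Finsupp.degree d = m
  · rw [if_pos hd, X_pow_eq_monomial, coeff_mul_monomial']
    rw [if_neg (fun hle => by have := fs_degree_ge hle; omega)]
    simp
  · simp [hd]

lemma homogeneousComponent_idem (m : ℕ) (p : MvPolynomial σ K) :
    homogeneousComponent m (homogeneousComponent m p) = homogeneousComponent m p := by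
  rw [homogeneousComponent_of_mem (homogeneousComponent_mem m p), if_pos rfl]

lemma totalDegree_homogeneousComponent_le (k : ℕ) (p : MvPolynomial σ K) :
    (homogeneousComponent k p).totalDegree ≤ k :=
  (homogeneousComponent_isHomogeneous k p).totalDegree_le

lemma fs_degree_eq_sum (m : σ →₀ ℕ) : (m.sum fun _ e => e) = Finsupp.degree m := rfl

lemma fs_degree_le_totalDegree {p : MvPolynomial σ K} {m : σ →₀ ℕ} (h : m ∈ p.support) :
    Finsupp.degree m ≤ p.totalDegree :=
  fs_degree_eq_sum m ▸ le_totalDegree h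

lemma totalDegree_le_of_support {p : MvPolynomial σ K} {d : ℕ}
    (h : ∀ m ∈ p.support, Finsupp.degree m ≤ d) : p.totalDegree ≤ d := by
  rw [MvPolynomial.totalDegree]
  exact Finset.sup_le fun m hm => (fs_degree_eq_sum m).le.trans (h m hm)

/-- antisymmetric double sums vanish -/
lemma sum_antisymm [Fintype σ] [DecidableEq σ] (A : σ → σ → MvPolynomial σ K)
    (h1 : ∀ i j, A j i = - A i j) (h2 : ∀ i, A i i = 0) :
    ∑ i, ∑ j, A i j = 0 := by
  rw [← Finset.sum_product']
  refine Finset.sum_ninvolution (fun p => (p.2, p.1)) ?_ ?_ (fun _ => Finset.mem_univ _)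
    (fun _ => rfl)
  · intro a
    rw [h1 a.1 a.2]
    simp
  · intro a hne heq
    apply hne
    have h21 : a.2 = a.1 := congrArg Prod.fst heq
    rw [show a = (a.1, a.2) from rfl, h21, h2]

section Descent

variable [Fintype σ] [DecidableEq σ]

lemma descent (Q : ℕ) (hQ : 0 < Q) (f : σ → MvPolynomial σ K)
    (hdeg : ∀ i, (f i).totalDegree < Q) (P : MvPolynomial σ K) (hP : P.totalDegree < Q) :
    ∀ d : ℕ, ∀ u : σ → MvPolynomial σ K,
      (∀ i, ∀ m ∈ (u i).support, Finsupp.degree m < d) →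
      (∑ i, u i * (f i - X i ^ Q)) = P → P = 0 := by
  intro d
  induction d with
  | zero =>
    intro u hu hrep
    have : ∀ i, u i = 0 := fun i => by
      rw [← MvPolynomial.support_eq_empty, Finset.eq_empty_iff_forall_notMem]
      exact fun m hm => Nat.not_lt_zero _ (hu i m hm)
    rw [← hrep]
    simp [this]
  | succ d ih =>
    intro u hu hrep
    have hudeg : ∀ i, (u i).totalDegree ≤ d :=
      fun i => totalDegree_le_of_support fun m hm => Nat.lt_succ_iff.mp (hu i m hm)
    set v : σ → MvPolynomial σ K := fun i => homogeneousComponent d (u i) with hv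
    -- key relation among top components
    have hkey : ∑ i, v i * X i ^ Q = 0 := by
      have hsplit : ∑ i, u i * (f i - X i ^ Q)
          = (∑ i, u i * f i) - ∑ i, u i * X i ^ Q := by
        rw [← Finset.sum_sub_distrib]
        exact Finset.sum_congr rfl fun i _ => mul_sub _ _ _
      have hsum : ∑ i, u i * X i ^ Q = (∑ i, u i * f i) - P := by
        rw [hsplit] at hrep; linear_combination -hrep
      have := congrArg (homogeneousComponent (d + Q)) hsum
      rw [map_sum, map_sub] at this
      rw [homogeneousComponent_eq_zero _ P (lt_of_lt_of_le hP (by omega : Q ≤ d + Q))] at this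
      have hz : homogeneousComponent (d + Q) (∑ i, u i * f i) = 0 := by
        apply homogeneousComponent_eq_zero _ _
        apply lt_of_le_of_lt (totalDegree_finset_sum _ _)
        apply Finset.sup_lt_iff (by omega : (0:ℕ) < d + Q) |>.mpr
        intro i _
        calc (u i * f i).totalDegree ≤ (u i).totalDegree + (f i).totalDegree :=
              totalDegree_mul _ _
          _ < d + Q := by have := hdeg i; have := hudeg i; omega
      rw [hz, sub_zero] at this
      rw [← this]
      exact (Finset.sum_congr rfl fun i _ =>
        (homogeneousComponent_mul_X_pow d Q i (u i)).symm)
    obtain ⟨w, hanti, hdiag, hw⟩ := syzygy Q Finset.univ (fun i => v i) hkey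
    by_cases hdQ : Q ≤ d
    · -- project the syzygy coefficients to degree d - Q
      set W : σ → σ → MvPolynomial σ K :=
        fun i j => homogeneousComponent (d - Q) (w i j) with hW
      have hWanti : ∀ i j, W i j = - W j i := by
        intro i j; rw [hW]; simp only; rw [hanti j i, map_neg]
      have hWdiag : ∀ i, W i i = 0 := by
        intro i; rw [hW]; simp only; rw [hdiag i, map_zero]
      have hWv : ∀ i, v i = ∑ j, W i j * X j ^ Q := by
        intro i
        have h1 := congrArg (homogeneousComponent d) (hw i (Finset.mem_univ i))
        rw [hv] at h1
        simp only at h1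
        rw [homogeneousComponent_idem, map_sum] at h1
        rw [hv]
        simp only
        rw [h1]
        refine Finset.sum_congr rfl fun j _ => ?_
        conv_lhs => rw [show d = (d - Q) + Q by omega]
        exact homogeneousComponent_mul_X_pow (d - Q) Q j (w i j)
      set u' : σ → MvPolynomial σ K :=
        fun i => (u i - v i) + ∑ j, W i j * f j with hu'
      -- new representation
      have hu'e : ∀ i, u' i = u i + ∑ j, W i j * (f j - X j ^ Q) := by
        intro i
        rw [hu']
        simp only
        have : ∑ j, W i j * (f j - X j ^ Q)
            = (∑ j, W i j * f j) - ∑ j, W i j * X j ^ Q := by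
          rw [← Finset.sum_sub_distrib]
          exact Finset.sum_congr rfl fun j _ => mul_sub _ _ _
        rw [this, ← hWv i]
        ring
      have hrep' : ∑ i, u' i * (f i - X i ^ Q) = P := by
        have hcancel : ∑ i, ∑ j, (W i j * (f j - X j ^ Q)) * (f i - X i ^ Q) = 0 := by
          apply sum_antisymm
          · intro i j
            rw [hWanti j i]
            ring
          · intro i
            rw [hWdiag i]
            ring
        calc ∑ i, u' i * (f i - X i ^ Q)
            = ∑ i, (u i * (f i - X i ^ Q)
                + ∑ j, (W i j * (f j - X j ^ Q)) * (f i - X i ^ Q)) := by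
              refine Finset.sum_congr rfl fun i _ => ?_
              rw [hu'e i, add_mul, Finset.sum_mul]
          _ = (∑ i, u i * (f i - X i ^ Q))
                + ∑ i, ∑ j, (W i j * (f j - X j ^ Q)) * (f i - X i ^ Q) := by
              rw [Finset.sum_add_distrib]
          _ = P := by rw [hrep, hcancel, add_zero]
      -- degree bound for the new coefficients
      refine ih u' ?_ hrep'
      intro i m hm
      have hco := MvPolynomial.mem_support_iff.mp hm
      rw [hu'] at hco
      simp only [coeff_add] at hco
      by_cases hc1 : coeff m (u i - v i) = 0
      · -- the second summand is nonzero
        have hc2 : coeff m (∑ j, W i j * f j) ≠ 0 := by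
          intro h0; exact hco (by rw [hc1, h0, add_zero])
        have hmem : m ∈ (∑ j, W i j * f j).support := MvPolynomial.mem_support_iff.mpr hc2
        have : Finsupp.degree m ≤ (∑ j, W i j * f j).totalDegree :=
          fs_degree_le_totalDegree hmem
        have hB : (∑ j, W i j * f j).totalDegree ≤ d - 1 := by
          apply le_trans (totalDegree_finset_sum _ _)
          apply Finset.sup_le
          intro j _
          calc (W i j * f j).totalDegree
              ≤ (W i j).totalDegree + (f j).totalDegree := totalDegree_mul _ _
            _ ≤ (d - Q) + (f j).totalDegree := by
                have := totalDegree_homogeneousComponent_le (d - Q) (w i j)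
                rw [hW]; simp only; omega
            _ ≤ d - 1 := by have := hdeg j; omega
        omega
      · -- the first summand is nonzero
        rw [MvPolynomial.coeff_sub] at hc1
        have hvm : coeff m (v i) = if Finsupp.degree m = d then coeff m (u i) else 0 := by
          rw [hv]; simp only; rw [coeff_homogeneousComponent]
        by_cases hdm : Finsupp.degree m = d
        · rw [hvm, if_pos hdm, sub_self] at hc1; exact absurd rfl hc1
        · rw [hvm, if_neg hdm, sub_zero] at hc1
          have := hu i m (MvPolynomial.mem_support_iff.mpr hc1)
          omega
    · -- d < Q : the top components vanish outright
      have hv0 : ∀ i, v i = 0 := by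
        intro i
        have h1 := congrArg (homogeneousComponent d) (hw i (Finset.mem_univ i))
        rw [hv] at h1; simp only at h1
        rw [homogeneousComponent_idem, map_sum] at h1
        rw [hv]; simp only
        rw [h1]
        refine Finset.sum_eq_zero fun j _ => ?_
        exact homogeneousComponent_mul_X_pow_of_lt (by omega) j (w i j)
      refine ih u ?_ hrep
      intro i m hm
      have hle := Nat.lt_succ_iff.mp (hu i m hm)
      rcases Nat.lt_or_ge (Finsupp.degree m) d with h | h
      · exact h
      · exfalso
        have hdm : Finsupp.degree m = d := le_antisymm hle h
        have : coeff m (v i) = coeff m (u i) := by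
          rw [hv]; simp only; rw [coeff_homogeneousComponent, if_pos hdm]
        rw [hv0 i] at this
        exact MvPolynomial.mem_support_iff.mp hm this.symm

end Descent

/-- If `deg fᵢ < Q` and `deg P < Q`, then `P` belongs to the ideal
`(f₁ - x₁^Q, ..., f_n - x_n^Q)` only if `P = 0`. -/
theorem not_mem_ideal_of_degree_lt {K : Type} [Field K] {n : ℕ} (Q : ℕ) (hQ : 0 < Q)
    (f : Fin n → MvPolynomial (Fin n) K) (hdeg : ∀ i, (f i).totalDegree < Q)
    (P : MvPolynomial (Fin n) K) (hP : P.totalDegree < Q)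
    (hmem : P ∈ Ideal.span (Set.range fun i : Fin n => f i - X i ^ Q)) :
    P = 0 := by
  obtain ⟨u, hu⟩ := Ideal.mem_span_range_iff_exists_fun.mp hmem
  refine descent Q hQ f hdeg P hP
    ((Finset.univ.sup fun i => (u i).totalDegree) + 1) u ?_ hu
  intro i m hm
  have h1 : Finsupp.degree m ≤ (u i).totalDegree := fs_degree_le_totalDegree hm
  have h2 : (u i).totalDegree ≤ Finset.univ.sup fun i => (u i).totalDegree :=
    Finset.le_sup (f := fun i => (u i).totalDegree) (Finset.mem_univ i)
  omega
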